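/- Let s ∈ (0,1), a < b with a, b ≥ 0, and f : ℝ → ℝ twice continuously differentiable on an interval containing [a,b]. Suppose |f''| is s-convex in the second sense on [a,b], i.e. |f''(λu + (1−λ)v)| ≤ λ^s |f''(u)| + (1−λ)^s |f''(v)| for all u,v ∈ [a,b] and λ ∈ [0,1]. Set M(s) = 1/(s+3) and N(s) = 1/(s+1) − 2/(s+2) + 1/(s+3). Then for all x ∈ [a,b]: |(1/(b−a)) ∫_a^b f(t) dt − f(x) + ((2x−a−b)/2) f'(x)| ≤ ((x−a)³/(2(b−a)))·(M(s)|f''(x)| + N(s)|f''(a)|) + ((b−x)³/(2(b−a)))·(M(s)|f''(x)| + N(s)|f''(b)|). -/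

import Mathlib

open intervalIntegral MeasureTheory

lemma cont_rpow {p : ℝ} (hp : 0 < p) : Continuous fun u : ℝ => u ^ p :=
  continuous_iff_continuousAt.2 fun x => Real.continuousAt_rpow_const x p (Or.inr hp.le)

lemma pow_int {c p : ℝ} (hp : 0 < p) : ∫ u in (0:ℝ)..c, u ^ p = c ^ (p+1) / (p+1) := by
  rw [integral_rpow (Or.inl (by linarith)), Real.zero_rpow (by linarith)]; ring

lemma pow_int2 {c p : ℝ} (hp : 0 < p) :
    ∫ u in (0:ℝ)..c, (c - u) ^ p = c ^ (p+1) / (p+1) := by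
  have := intervalIntegral.integral_comp_sub_left (a := 0) (b := c) (fun u => u ^ p) c
  simpa [pow_int hp] using this

lemma key_bound (g : ℝ → ℝ) (c s A B : ℝ) (hc : 0 < c) (hs : 0 < s)
    (hg : ContinuousOn g (Set.Icc 0 c))
    (hbd : ∀ u ∈ Set.Icc (0:ℝ) c, |g u| ≤ (u/c)^s * A + ((c-u)/c)^s * B) :
    |∫ u in (0:ℝ)..c, (u^2/2) * g u|
      ≤ (c^3/2) * ((1/(s+3))*A + (1/(s+1)-2/(s+2)+1/(s+3))*B) := by
  have hcs : (0:ℝ) < c ^ s := Real.rpow_pos_of_pos hc s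
  have hicc : Set.uIcc (0:ℝ) c = Set.Icc 0 c := Set.uIcc_of_le hc.le
  -- integrability of pieces
  have i1 : IntervalIntegrable (fun u : ℝ => u ^ (s+2)) volume 0 c :=
    ((cont_rpow (by linarith)).intervalIntegrable _ _)
  have i2 : ∀ p : ℝ, 0 < p → IntervalIntegrable (fun u : ℝ => (c - u) ^ p) volume 0 c := fun p hp =>
    (((cont_rpow hp).comp (continuous_const.sub continuous_id)).intervalIntegrable _ _)
  -- bound function and its integrability
  set h : ℝ → ℝ := fun u => (A/(2*c^s)) * u^(s+2)
      + (B/(2*c^s)) * (c^2*(c-u)^s - 2*c*(c-u)^(s+1) + (c-u)^(s+2)) with hh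
  have ih : IntervalIntegrable h volume 0 c := by
    apply ((i1.const_mul _).add _)
    exact ((((i2 s hs).const_mul _).sub ((i2 (s+1) (by linarith)).const_mul _)).add
      (i2 (s+2) (by linarith))).const_mul _
  -- pointwise bound
  have hpt : ∀ u ∈ Set.Icc (0:ℝ) c, |(u^2/2) * g u| ≤ h u := by
    intro u hu
    obtain ⟨hu0, huc⟩ := hu
    have e1 : u ^ (s+2) = u ^ s * u ^ 2 := by
      rw [Real.rpow_add' hu0 (by positivity)]
      norm_num [Real.rpow_natCast]
    have hv0 : (0:ℝ) ≤ c - u := by linarith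
    have e2 : (c-u) ^ (s+1) = (c-u) ^ s * (c-u) := by
      rw [Real.rpow_add' hv0 (by positivity)]
      norm_num
    have e3 : (c-u) ^ (s+2) = (c-u) ^ s * (c-u) ^ 2 := by
      rw [Real.rpow_add' hv0 (by positivity)]
      norm_num [Real.rpow_natCast]
    have heq : h u = (u^2/2) * ((u/c)^s * A + ((c-u)/c)^s * B) := by
      rw [hh]
      simp only [Real.div_rpow hu0 hc.le, Real.div_rpow hv0 hc.le, e1, e2, e3]
      field_simp
      ring
    rw [abs_mul, abs_of_nonneg (by positivity : (0:ℝ) ≤ u^2/2), heq]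
    exact mul_le_mul_of_nonneg_left (hbd u ⟨hu0, huc⟩) (by positivity)
  -- integrability of |(u^2/2) g u|
  have hgi : IntervalIntegrable (fun u => (u^2/2) * g u) volume 0 c :=
    ((((continuous_pow 2).continuousOn.div_const 2).mul hg).mono (by rw [hicc] : Set.uIcc (0:ℝ) c ⊆ Set.Icc 0 c)).intervalIntegrable
  have step1 : |∫ u in (0:ℝ)..c, (u^2/2) * g u| ≤ ∫ u in (0:ℝ)..c, h u := by
    calc |∫ u in (0:ℝ)..c, (u^2/2) * g u| ≤ ∫ u in (0:ℝ)..c, |(u^2/2) * g u| := by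
          exact
            intervalIntegral.norm_integral_le_integral_norm (f := fun u => (u^2/2) * g u)
              (μ := volume) hc.le
      _ ≤ ∫ u in (0:ℝ)..c, h u :=
          intervalIntegral.integral_mono_on hc.le hgi.abs ih hpt
  -- compute ∫ h
  have ehs : ∫ u in (0:ℝ)..c, h u
      = (c^3/2) * ((1/(s+3))*A + (1/(s+1)-2/(s+2)+1/(s+3))*B) := by
    rw [hh]
    rw [intervalIntegral.integral_add (i1.const_mul _)
      (((((i2 s hs).const_mul _).sub ((i2 (s+1) (by linarith)).const_mul _)).add
        (i2 (s+2) (by linarith))).const_mul _)]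
    rw [intervalIntegral.integral_const_mul, intervalIntegral.integral_const_mul]
    rw [intervalIntegral.integral_add
      (((i2 s hs).const_mul _).sub ((i2 (s+1) (by linarith)).const_mul _)) (i2 (s+2) (by linarith))]
    rw [intervalIntegral.integral_sub ((i2 s hs).const_mul _) ((i2 (s+1) (by linarith)).const_mul _)]
    rw [intervalIntegral.integral_const_mul, intervalIntegral.integral_const_mul]
    rw [pow_int (by linarith : (0:ℝ) < s+2), pow_int2 hs, pow_int2 (by linarith : (0:ℝ) < s+1),
      pow_int2 (by linarith : (0:ℝ) < s+2)]
    have c1 : c ^ (s+1) = c ^ s * c := by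
      rw [Real.rpow_add' hc.le (by positivity)]; norm_num
    have c2 : c ^ (s+1+1) = c ^ s * c^2 := by
      rw [show s+1+1 = s+2 by ring, Real.rpow_add' hc.le (by positivity)]
      norm_num [Real.rpow_natCast]
    have c3 : c ^ (s+2+1) = c ^ s * c^3 := by
      rw [show s+2+1 = s+3 by ring, Real.rpow_add' hc.le (by positivity)]
      congr 1
      rw [show (3:ℝ) = ((3:ℕ):ℝ) by norm_num, Real.rpow_natCast]
    rw [show s+1+1 = s+2 by ring] at c2 ⊢
    rw [show s+2+1 = s+3 by ring] at c3 ⊢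
    rw [c1, c2, c3]
    have h1 : s+1 ≠ 0 := by linarith
    have h2 : s+2 ≠ 0 := by linarith
    have h3 : s+3 ≠ 0 := by linarith
    field_simp
  linarith [step1, ehs.le, le_of_eq ehs]

lemma ibp_identity (f : ℝ → ℝ) (a b x : ℝ) (hax : a ≤ x) (hxb : x ≤ b)
    (U : Set ℝ) (hU : IsOpen U) (hsub : Set.Icc a b ⊆ U) (hf : ContDiffOn ℝ 2 f U) :
    (∫ t in a..x, ((t-a)^2/2) * deriv (deriv f) t)
      + (∫ t in x..b, ((b-t)^2/2) * deriv (deriv f) t)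
    = (∫ t in a..b, f t) - (b-a) * f x + ((2*x-a-b)*(b-a)/2) * deriv f x := by
  have hd1 : ∀ u ∈ U, HasDerivAt f (deriv f u) u := fun u hu =>
    ((hf.differentiableOn (by norm_num)).differentiableAt (hU.mem_nhds hu)).hasDerivAt
  have hf1 : ContDiffOn ℝ 1 (deriv f) U := hf.deriv_of_isOpen hU (by norm_num)
  have hd2 : ∀ u ∈ U, HasDerivAt (deriv f) (deriv (deriv f) u) u := fun u hu =>
    ((hf1.differentiableOn (by norm_num)).differentiableAt (hU.mem_nhds hu)).hasDerivAt
  have hc2 : ContinuousOn (deriv (deriv f)) U :=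
    (hf1.deriv_of_isOpen (m := 0) hU (by norm_num)).continuousOn
  have hc1 : ContinuousOn (deriv f) U := hf1.continuousOn
  have hc0 : ContinuousOn f U := hf.continuousOn
  have sax : Set.uIcc a x ⊆ U := by
    rw [Set.uIcc_of_le hax]
    exact (Set.Icc_subset_Icc le_rfl hxb).trans hsub
  have sxb : Set.uIcc x b ⊆ U := by
    rw [Set.uIcc_of_le hxb]
    exact (Set.Icc_subset_Icc hax le_rfl).trans hsub
  have h1 := intervalIntegral.integral_mul_deriv_eq_deriv_mul
    (u := fun t => (t-a)^2/2) (u' := fun t => t-a) (v := deriv f) (v' := deriv (deriv f))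
    (fun t _ => by
      have := (((hasDerivAt_id t).sub_const a).pow 2).div_const 2
      convert this using 1 <;> simp [Pi.pow_apply, Pi.sub_apply] <;> ring)
    (fun t ht => hd2 t (sax ht))
    ((continuous_id.sub continuous_const).intervalIntegrable _ _)
    ((hc2.mono sax).intervalIntegrable)
  have h2 := intervalIntegral.integral_mul_deriv_eq_deriv_mul
    (u := fun t => t-a) (u' := fun _ => (1:ℝ)) (v := f) (v' := deriv f)
    (fun t _ => by simpa using (hasDerivAt_id t).sub_const a)
    (fun t ht => hd1 t (sax ht))
    (intervalIntegrable_const)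
    ((hc1.mono sax).intervalIntegrable)
  have h3 := intervalIntegral.integral_mul_deriv_eq_deriv_mul
    (u := fun t => (b-t)^2/2) (u' := fun t => t-b) (v := deriv f) (v' := deriv (deriv f))
    (fun t _ => by
      have := (((hasDerivAt_const t b).sub (hasDerivAt_id t)).pow 2).div_const 2
      convert this using 1 <;> simp [Pi.pow_apply, Pi.sub_apply] <;> ring)
    (fun t ht => hd2 t (sxb ht))
    ((continuous_id.sub continuous_const).intervalIntegrable _ _)
    ((hc2.mono sxb).intervalIntegrable)
  have h4 := intervalIntegral.integral_mul_deriv_eq_deriv_mul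
    (u := fun t => t-b) (u' := fun _ => (1:ℝ)) (v := f) (v' := deriv f)
    (fun t _ => by simpa using (hasDerivAt_id t).sub_const b)
    (fun t ht => hd1 t (sxb ht))
    (intervalIntegrable_const)
    ((hc1.mono sxb).intervalIntegrable)
  simp only [one_mul] at h2 h4
  have hsplit : (∫ t in a..x, f t) + (∫ t in x..b, f t) = ∫ t in a..b, f t :=
    intervalIntegral.integral_add_adjacent_intervals
      ((hc0.mono sax).intervalIntegrable) ((hc0.mono sxb).intervalIntegrable)
  rw [h1, h3, h2, h4, ← hsplit]
  ring

theorem stmt_3 (f : ℝ → ℝ) (a b : ℝ) (s : ℝ) (hs : s ∈ Set.Ioo (0:ℝ) 1)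
    (ha : 0 ≤ a) (hb : 0 ≤ b) (hab : a < b)
    (U : Set ℝ) (hU : IsOpen U) (hsub : Set.Icc a b ⊆ U) (hf : ContDiffOn ℝ 2 f U)
    (hsc : ∀ u ∈ Set.Icc a b, ∀ v ∈ Set.Icc a b, ∀ l ∈ Set.Icc (0:ℝ) 1,
      |deriv (deriv f) (l*u + (1-l)*v)| ≤
        l ^ s * |deriv (deriv f) u| + (1-l) ^ s * |deriv (deriv f) v|) :
    ∀ x ∈ Set.Icc a b,
      |(1/(b-a)) * (∫ t in a..b, f t) - f x + ((2*x - a - b)/2) * deriv f x|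
        ≤ ((x-a)^3/(2*(b-a))) *
            ((1/(s+3)) * |deriv (deriv f) x| + (1/(s+1) - 2/(s+2) + 1/(s+3)) * |deriv (deriv f) a|)
        + ((b-x)^3/(2*(b-a))) *
            ((1/(s+3)) * |deriv (deriv f) x| + (1/(s+1) - 2/(s+2) + 1/(s+3)) * |deriv (deriv f) b|) := by
  intro x hx
  obtain ⟨hax, hxb⟩ := hx
  obtain ⟨hs0, hs1⟩ := hs
  have hba : (0:ℝ) < b - a := by linarith
  set D := deriv (deriv f) with hD
  -- continuity of D on U
  have hf1 : ContDiffOn ℝ 1 (deriv f) U := hf.deriv_of_isOpen hU (by norm_num)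
  have hc2 : ContinuousOn D U := (hf1.deriv_of_isOpen (m := 0) hU (by norm_num)).continuousOn
  set I₁ := ∫ t in a..x, ((t-a)^2/2) * D t with hI1
  set I₂ := ∫ t in x..b, ((b-t)^2/2) * D t with hI2
  set M := (1:ℝ)/(s+3) with hM
  set N := 1/(s+1) - 2/(s+2) + 1/(s+3) with hN
  have hid := ibp_identity f a b x hax hxb U hU hsub hf
  -- bound on I₁
  have b1 : |I₁| ≤ ((x-a)^3/2) * (M * |D x| + N * |D a|) := by
    rcases eq_or_lt_of_le hax with h | h
    · simp [hI1, ← h, intervalIntegral.integral_same]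
    · set c := x - a with hc
      have hc0 : 0 < c := by simp [hc]; linarith
      have htrans : I₁ = ∫ u in (0:ℝ)..c, (u^2/2) * D (u + a) := by
        rw [hI1]
        have := intervalIntegral.integral_comp_add_right (a := 0) (b := c)
          (fun t => ((t-a)^2/2) * D t) a
        simp only [zero_add, hc] at this
        rw [sub_add_cancel] at this
        rw [← this]
        congr 1; funext u; simp [add_sub_cancel_right]
      rw [htrans]
      apply key_bound _ c s (|D x|) (|D a|) hc0 hs0
      · exact hc2.comp (Continuous.continuousOn (by continuity))
          (fun u hu => hsub ⟨by linarith [hu.1], by linarith [hu.2]⟩)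
      · intro u hu
        obtain ⟨hu0, huc⟩ := hu
        have hl : u/c ∈ Set.Icc (0:ℝ) 1 :=
          ⟨by positivity, by rw [div_le_one hc0]; linarith⟩
        have := hsc x ⟨hax, hxb⟩ a ⟨le_rfl, hab.le⟩ (u/c) hl
        have harg : (u/c)*x + (1-(u/c))*a = u + a := by
          field_simp
          ring
        have h1l : 1 - u/c = (c-u)/c := by field_simp
        rw [harg, h1l] at this
        exact this
  -- bound on I₂
  have b2 : |I₂| ≤ ((b-x)^3/2) * (M * |D x| + N * |D b|) := by
    rcases eq_or_lt_of_le hxb with h | h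
    · simp [hI2, h, intervalIntegral.integral_same]
    · set c := b - x with hc
      have hc0 : 0 < c := by simp [hc]; linarith
      have htrans : I₂ = ∫ v in (0:ℝ)..c, (v^2/2) * D (b - v) := by
        rw [hI2]
        have := intervalIntegral.integral_comp_sub_left (a := 0) (b := c)
          (fun t => ((b-t)^2/2) * D t) b
        simp only [sub_zero, hc] at this
        rw [sub_sub_cancel] at this
        rw [← this]
        congr 1; funext v; simp [sub_sub_cancel]
      rw [htrans]
      apply key_bound _ c s (|D x|) (|D b|) hc0 hs0
      · exact hc2.comp (Continuous.continuousOn (by continuity))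
          (fun v hv => hsub ⟨by linarith [hv.2], by linarith [hv.1]⟩)
      · intro v hv
        obtain ⟨hv0, hvc⟩ := hv
        have hl : v/c ∈ Set.Icc (0:ℝ) 1 :=
          ⟨by positivity, by rw [div_le_one hc0]; linarith⟩
        have := hsc x ⟨hax, hxb⟩ b ⟨hab.le, le_rfl⟩ (v/c) hl
        have harg : (v/c)*x + (1-(v/c))*b = b - v := by
          field_simp
          ring
        have h1l : 1 - v/c = (c-v)/c := by field_simp
        rw [harg, h1l] at this
        exact this
  have hE : (1/(b-a)) * (∫ t in a..b, f t) - f x + ((2*x - a - b)/2) * deriv f x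
      = (I₁ + I₂)/(b-a) := by
    rw [eq_div_iff (by linarith : b - a ≠ 0), hid]
    field_simp
  rw [hE]
  calc |(I₁ + I₂)/(b-a)| = |I₁ + I₂|/(b-a) := by
        rw [abs_div, abs_of_pos hba]
    _ ≤ (|I₁| + |I₂|)/(b-a) := by gcongr; exact abs_add_le _ _
    _ ≤ (((x-a)^3/2) * (M * |D x| + N * |D a|) + ((b-x)^3/2) * (M * |D x| + N * |D b|))/(b-a) := by
        gcongr
    _ = ((x-a)^3/(2*(b-a))) * (M * |D x| + N * |D a|)
        + ((b-x)^3/(2*(b-a))) * (M * |D x| + N * |D b|) := by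
        field_simp
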